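/- Super-uniformity inequality (second inequality of Lemma 2): under independence of the p-values P_1,...,P_T, monotonicity of the rules f_t and g_t, and super-uniformity of each null p-value, for any coordinatewise non-decreasing function g: {0,1}^T → (0,∞) and any t ≤ T with t ∈ H⁰, one has E[α_t/g(R_{1:T}) | F^{t-1}] ≥ E[1{P_t ≤ α_t}/g(R_{1:T}) | F^{t-1}] almost surely. -/

import Mathlib

open MeasureTheory ProbabilityTheory

/-- The rejection-and-candidacy indicator history available just before testing hypothesis `t`:
the pair of indicators `R_j = 1{P_j ≤ α_j}` and `C_j = 1{P_j ≤ λ_j}` for `j < t`,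
encoded as a pair of boolean sequences. -/
noncomputable def history {Ω : Type*} (P alpha lam : ℕ → Ω → ℝ) (t : ℕ) (ω : Ω) :
    (ℕ → Bool) × (ℕ → Bool) :=
  (fun j => decide (j < t ∧ P j ω ≤ alpha j ω), fun j => decide (j < t ∧ P j ω ≤ lam j ω))

/-- The full vector of rejection indicators `R_{1:T}`, encoded as a boolean sequence
supported on the indices `j < T`. -/
noncomputable def rejVector {Ω : Type*} (P alpha : ℕ → Ω → ℝ) (T : ℕ) (ω : Ω) : ℕ → Bool :=
  fun j => decide (j < T ∧ P j ω ≤ alpha j ω)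

namespace Lemma2Aux

abbrev Hist := (ℕ → Bool) × (ℕ → Bool)

variable {α : Type*}

noncomputable def histRec (f g' : ℕ → Hist → ℝ) (Pv : ℕ → α → ℝ) : ℕ → α → Hist
  | 0 => fun _ => (fun _ => false, fun _ => false)
  | s + 1 => fun ω =>
      let h := histRec f g' Pv s ω
      (Function.update h.1 s (decide (Pv s ω ≤ f s h)),
       Function.update h.2 s (decide (Pv s ω ≤ g' s h)))

lemma decide_le_decide' {p q : Prop} [Decidable p] [Decidable q] (h : p → q) :
    decide p ≤ decide q := by
  by_cases hp : p
  · simp [hp, h hp]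
  · simp [hp]

lemma histRec_support (f g' : ℕ → Hist → ℝ) (Pv : ℕ → α → ℝ) :
    ∀ s (ω : α) j, s ≤ j →
      (histRec f g' Pv s ω).1 j = false ∧ (histRec f g' Pv s ω).2 j = false := by
  intro s
  induction s with
  | zero => intro ω j _; exact ⟨rfl, rfl⟩
  | succ s ih =>
    intro ω j hj
    have hjs : j ≠ s := by omega
    simp only [histRec, Function.update_of_ne hjs]
    exact ih ω j (by omega)

lemma histRec_ext {β : Type*} (f g' : ℕ → Hist → ℝ) (Pv : ℕ → α → ℝ) (Qv : ℕ → β → ℝ)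
    (s : ℕ) (ω : α) (y : β) (h : ∀ j < s, Pv j ω = Qv j y) :
    histRec f g' Pv s ω = histRec f g' Qv s y := by
  induction s with
  | zero => rfl
  | succ s ih =>
    have hih : histRec f g' Pv s ω = histRec f g' Qv s y :=
      ih fun j hj => h j (by omega)
    simp only [histRec, hih, h s (by omega)]

lemma histRec_mono {β : Type*} (f g' : ℕ → Hist → ℝ) (hf : ∀ s, Monotone (f s))
    (hg : ∀ s, Monotone (g' s)) (Pv : ℕ → α → ℝ) (Qv : ℕ → β → ℝ)
    (s : ℕ) (ω : α) (y : β) (h : ∀ j < s, Qv j y ≤ Pv j ω) :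
    histRec f g' Pv s ω ≤ histRec f g' Qv s y := by
  induction s with
  | zero => exact le_rfl
  | succ s ih =>
    have hih : histRec f g' Pv s ω ≤ histRec f g' Qv s y := ih fun j hj => h j (by omega)
    constructor
    · intro j
      simp only [histRec, Function.update_apply]
      by_cases hj : j = s
      · simp only [hj, if_pos rfl]
        exact decide_le_decide' fun hle =>
          le_trans (h s (by omega)) (le_trans hle (hf s hih))
      · simpa only [if_neg hj] using hih.1 j
    · intro j
      simp only [histRec, Function.update_apply]
      by_cases hj : j = s
      · simp only [hj, if_pos rfl]
        exact decide_le_decide' fun hle =>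
          le_trans (h s (by omega)) (le_trans hle (hg s hih))
      · simpa only [if_neg hj] using hih.2 j

lemma histRec_congr {β : Type*} (f g' : ℕ → Hist → ℝ) (Pv : ℕ → α → ℝ) (Qv : ℕ → β → ℝ)
    (s : ℕ) (ω : α) (y : β)
    (h : ∀ j < s,
      ((Pv j ω ≤ f j (histRec f g' Pv j ω)) ↔ (Qv j y ≤ f j (histRec f g' Pv j ω))) ∧
      ((Pv j ω ≤ g' j (histRec f g' Pv j ω)) ↔ (Qv j y ≤ g' j (histRec f g' Pv j ω)))) :
    histRec f g' Pv s ω = histRec f g' Qv s y := by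
  induction s with
  | zero => rfl
  | succ s ih =>
    have hih : histRec f g' Pv s ω = histRec f g' Qv s y :=
      ih fun j hj => h j (by omega)
    have h1 := (h s (by omega)).1
    have h2 := (h s (by omega)).2
    simp only [histRec, ← hih]
    rw [decide_eq_decide.mpr h1, decide_eq_decide.mpr h2]

noncomputable def extH (N : ℕ) (v : (Fin N → Bool) × (Fin N → Bool)) : Hist :=
  (fun j => if h : j < N then v.1 ⟨j, h⟩ else false,
   fun j => if h : j < N then v.2 ⟨j, h⟩ else false)

def truncH (N : ℕ) (h : Hist) : (Fin N → Bool) × (Fin N → Bool) :=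
  (fun i => h.1 i, fun i => h.2 i)

lemma measurable_truncH (N : ℕ) : Measurable (truncH N) := by
  refine Measurable.prod ?_ ?_
  · exact measurable_pi_lambda _ fun i => (measurable_pi_apply (i : ℕ)).comp measurable_fst
  · exact measurable_pi_lambda _ fun i => (measurable_pi_apply (i : ℕ)).comp measurable_snd

lemma extH_truncH (N : ℕ) (h : Hist)
    (hs : ∀ j, N ≤ j → h.1 j = false ∧ h.2 j = false) : extH N (truncH N h) = h := by
  refine Prod.ext (funext fun j => ?_) (funext fun j => ?_) <;>
    · simp only [extH, truncH]
      by_cases hj : j < N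
      · simp [hj]
      · simp only [dif_neg hj]
        first
          | exact ((hs j (by omega)).1).symm
          | exact ((hs j (by omega)).2).symm

lemma measurable_decide [MeasurableSpace α] {q : α → Prop} [∀ a, Decidable (q a)]
    (h : MeasurableSet {a | q a}) : Measurable fun a => decide (q a) := by
  have : (fun a => decide (q a)) = fun a => if a ∈ {a | q a} then true else false := by
    funext a; by_cases hq : q a <;> simp [hq]
  rw [this]
  exact Measurable.ite h measurable_const measurable_const

lemma measurable_histRec [MeasurableSpace α] (f g' : ℕ → Hist → ℝ) (Pv : ℕ → α → ℝ)
    (hPv : ∀ j, Measurable (Pv j)) : ∀ s, Measurable (histRec f g' Pv s) := by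
  intro s
  induction s with
  | zero => exact measurable_const
  | succ s ih =>
    have hcomp : ∀ {β : Type} [MeasurableSpace β] (F : Hist → β),
        Measurable fun ω => F (histRec f g' Pv s ω) := by
      intro β _ F
      have heq : (fun ω => F (histRec f g' Pv s ω))
          = (F ∘ extH s) ∘ (truncH s ∘ histRec f g' Pv s) := by
        funext ω
        simp only [Function.comp_apply]
        rw [extH_truncH s _ (fun j hj => histRec_support f g' Pv s ω j hj)]
      rw [heq]
      exact (measurable_of_countable (F ∘ extH s)).comp ((measurable_truncH s).comp ih)
    have hb : Measurable fun ω => decide (Pv s ω ≤ f s (histRec f g' Pv s ω)) :=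
      measurable_decide (measurableSet_le (hPv s) (hcomp (f s)))
    have hc : Measurable fun ω => decide (Pv s ω ≤ g' s (histRec f g' Pv s ω)) :=
      measurable_decide (measurableSet_le (hPv s) (hcomp (g' s)))
    refine Measurable.prod ?_ ?_
    · refine measurable_pi_lambda _ fun j => ?_
      simp only [histRec, Function.update_apply]
      by_cases hj : j = s
      · simpa only [hj, if_pos rfl, ↓reduceIte] using hb
      · simp only [if_neg hj]
        exact (measurable_pi_apply j).comp (measurable_fst.comp ih)
    · refine measurable_pi_lambda _ fun j => ?_
      simp only [histRec, Function.update_apply]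
      by_cases hj : j = s
      · simpa only [hj, if_pos rfl, ↓reduceIte] using hc
      · simp only [if_neg hj]
        exact (measurable_pi_apply j).comp (measurable_snd.comp ih)

lemma measurable_comp_histRec [MeasurableSpace α] (f g' : ℕ → Hist → ℝ) (Pv : ℕ → α → ℝ)
    (hPv : ∀ j, Measurable (Pv j)) (s : ℕ) {β : Type*} [MeasurableSpace β] (F : Hist → β) :
    Measurable fun ω => F (histRec f g' Pv s ω) := by
  have heq : (fun ω => F (histRec f g' Pv s ω))
      = (F ∘ extH s) ∘ (truncH s ∘ histRec f g' Pv s) := by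
    funext ω
    simp only [Function.comp_apply]
    rw [extH_truncH s _ (fun j hj => histRec_support f g' Pv s ω j hj)]
  rw [heq]
  exact (measurable_of_countable (F ∘ extH s)).comp
    ((measurable_truncH s).comp (measurable_histRec f g' Pv hPv s))

lemma histRec_eq_history {Ω : Type*} (P alpha lam : ℕ → Ω → ℝ) (f g' : ℕ → Hist → ℝ)
    (hpreda : ∀ s ω, alpha s ω = f s (history P alpha lam s ω))
    (hpredl : ∀ s ω, lam s ω = g' s (history P alpha lam s ω)) :
    ∀ s ω, histRec f g' P s ω = history P alpha lam s ω := by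
  intro s
  induction s with
  | zero =>
    intro ω
    refine Prod.ext (funext fun j => ?_) (funext fun j => ?_) <;>
      simp [histRec, history]
  | succ s ih =>
    intro ω
    have hihω := ih ω
    refine Prod.ext (funext fun j => ?_) (funext fun j => ?_)
    · show Function.update (histRec f g' P s ω).1 s
        (decide (P s ω ≤ f s (histRec f g' P s ω))) j = _
      rw [hihω, ← hpreda s ω]
      by_cases hj : j = s
      · subst hj
        rw [Function.update_self]
        show _ = decide (j < j + 1 ∧ P j ω ≤ alpha j ω)
        exact decide_eq_decide.mpr ((and_iff_right (by omega)).symm)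
      · rw [Function.update_of_ne hj]
        show decide (j < s ∧ P j ω ≤ alpha j ω) = decide (j < s + 1 ∧ P j ω ≤ alpha j ω)
        exact decide_eq_decide.mpr
          ⟨fun h => ⟨by omega, h.2⟩, fun h => ⟨by omega, h.2⟩⟩
    · show Function.update (histRec f g' P s ω).2 s
        (decide (P s ω ≤ g' s (histRec f g' P s ω))) j = _
      rw [hihω, ← hpredl s ω]
      by_cases hj : j = s
      · subst hj
        rw [Function.update_self]
        show _ = decide (j < j + 1 ∧ P j ω ≤ lam j ω)
        exact decide_eq_decide.mpr ((and_iff_right (by omega)).symm)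
      · rw [Function.update_of_ne hj]
        show decide (j < s ∧ P j ω ≤ lam j ω) = decide (j < s + 1 ∧ P j ω ≤ lam j ω)
        exact decide_eq_decide.mpr
          ⟨fun h => ⟨by omega, h.2⟩, fun h => ⟨by omega, h.2⟩⟩

end Lemma2Aux

/-- Super-uniformity inequality (second inequality of Lemma 2): under independence of the
p-values `P_1, ..., P_T`, monotonicity of the rules, and super-uniformity of each null
p-value, for any coordinatewise non-decreasing positive function `g` of the rejection
vector and any null index `t < T`,
`E[α_t / g(R_{1:T}) | F^{t-1}] ≥ E[1{P_t ≤ α_t} / g(R_{1:T}) | F^{t-1}]`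
almost surely. -/
theorem lemma2_second_inequality {Ω : Type*} [m0 : MeasurableSpace Ω]
    (μ : Measure Ω) [IsProbabilityMeasure μ]
    (T : ℕ) (P alpha lam : ℕ → Ω → ℝ) (H0 : Set ℕ)
    (hPmeas : ∀ j, Measurable (P j)) (hP01 : ∀ j ω, P j ω ∈ Set.Icc (0 : ℝ) 1)
    -- the p-values `P_1, ..., P_T` are independent
    (hindep : ProbabilityTheory.iIndepFun (m := fun _ : Fin T => (inferInstance : MeasurableSpace ℝ))
      (fun i : Fin T => P i.1) μ)
    -- each null p-value is super-uniform
    (hnull : ∀ j ∈ H0, ∀ u ∈ Set.Icc (0 : ℝ) 1, μ {ω | P j ω ≤ u} ≤ ENNReal.ofReal u)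
    (hameas : ∀ j, Measurable (alpha j)) (ha01 : ∀ j ω, alpha j ω ∈ Set.Ioo (0 : ℝ) 1)
    (hlmeas : ∀ j, Measurable (lam j)) (hl01 : ∀ j ω, lam j ω ∈ Set.Ioo (0 : ℝ) 1)
    (halam : ∀ j ω, alpha j ω ≤ lam j ω)
    -- predictability and monotonicity of the rules producing `α_t` and `λ_t`
    (f g' : ℕ → (ℕ → Bool) × (ℕ → Bool) → ℝ)
    (hpreda : ∀ s ω, alpha s ω = f s (history P alpha lam s ω))
    (hpredl : ∀ s ω, lam s ω = g' s (history P alpha lam s ω))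
    (hfmono : ∀ s, Monotone (f s)) (hg'mono : ∀ s, Monotone (g' s))
    -- `g` is a positive coordinatewise non-decreasing function of the rejection vector
    (g : (ℕ → Bool) → ℝ) (hgpos : ∀ x, 0 < g x) (hgmono : Monotone g)
    (t : ℕ) (ht : t < T) (htnull : t ∈ H0) :
    ∀ᵐ ω ∂μ,
      (μ[fun ω' => (if P t ω' ≤ alpha t ω' then (1 : ℝ) else 0) / g (rejVector P alpha T ω') |
          MeasurableSpace.comap (history P alpha lam t) inferInstance]) ω
        ≤ (μ[fun ω' => alpha t ω' / g (rejVector P alpha T ω') |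
          MeasurableSpace.comap (history P alpha lam t) inferInstance]) ω := by
  classical
  open Lemma2Aux in
  set X : Ω → ℝ :=
    fun ω' => (if P t ω' ≤ alpha t ω' then (1 : ℝ) else 0) / g (rejVector P alpha T ω')
    with hXdef
  set Z : Ω → ℝ := fun ω' => alpha t ω' / g (rejVector P alpha T ω') with hZdef
  -- identification of history with histRec
  have hH : ∀ s ω, Lemma2Aux.histRec f g' P s ω = history P alpha lam s ω :=
    Lemma2Aux.histRec_eq_history P alpha lam f g' hpreda hpredl
  have hhist_meas : Measurable (history P alpha lam t) := by
    have h1 := Lemma2Aux.measurable_histRec f g' P hPmeas t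
    have heq : history P alpha lam t = Lemma2Aux.histRec f g' P t :=
      funext fun ω => (hH t ω).symm
    rw [heq]; exact h1
  have hm' : MeasurableSpace.comap (history P alpha lam t) inferInstance ≤ m0 := hhist_meas.comap_le
  haveI : SigmaFinite (μ.trim hm') := inferInstance
  -- bounds
  set c : ℝ := g (fun _ => false) with hcdef
  have hc : 0 < c := hgpos _
  have hbot : ∀ R : ℕ → Bool, c ≤ g R := fun R => hgmono fun j => Bool.false_le _
  -- measurability of g ∘ rejVector
  have hrejeq : ∀ ω, rejVector P alpha T ω = (Lemma2Aux.histRec f g' P T ω).1 := by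
    intro ω; rw [hH]; rfl
  have hgrej_meas : Measurable fun ω => g (rejVector P alpha T ω) := by
    have h1 := Lemma2Aux.measurable_comp_histRec f g' P hPmeas T fun h => g h.1
    simpa only [← hrejeq] using h1
  -- X, Z measurable and integrable
  have hXmeas : Measurable X := by
    refine Measurable.div ?_ hgrej_meas
    exact Measurable.ite (measurableSet_le (hPmeas t) (hameas t))
      measurable_const measurable_const
  have hZmeas : Measurable Z := (hameas t).div hgrej_meas
  have hXnn : ∀ ω, 0 ≤ X ω := by
    intro ω
    refine div_nonneg ?_ (hgpos _).le
    split <;> norm_num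
  have hZnn : ∀ ω, 0 ≤ Z ω := fun ω => div_nonneg (ha01 t ω).1.le (hgpos _).le
  have hXbd : ∀ ω, X ω ≤ c⁻¹ := by
    intro ω
    rw [← one_div]
    refine div_le_div₀ zero_le_one ?_ hc (hbot _)
    split <;> norm_num
  have hZbd : ∀ ω, Z ω ≤ c⁻¹ := by
    intro ω
    rw [← one_div]
    exact div_le_div₀ zero_le_one (ha01 t ω).2.le hc (hbot _)
  have hXint : Integrable X μ :=
    Integrable.mono' (integrable_const c⁻¹) hXmeas.aestronglyMeasurable
      (ae_of_all _ fun ω => by rw [Real.norm_eq_abs, abs_of_nonneg (hXnn ω)]; exact hXbd ω)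
  have hZint : Integrable Z μ :=
    Integrable.mono' (integrable_const c⁻¹) hZmeas.aestronglyMeasurable
      (ae_of_all _ fun ω => by rw [Real.norm_eq_abs, abs_of_nonneg (hZnn ω)]; exact hZbd ω)
  -- the modified p-values and the vector reduction
  set Pm : ℕ → Ω → ℝ := fun j ω => if j = t then 0 else P j ω with hPmdef
  have hPm_meas : ∀ j, Measurable (Pm j) := by
    intro j
    by_cases hj : j = t <;> simp only [hPmdef, hj, if_pos, if_neg, ite_true, ite_false]
    · exact measurable_const
    · exact hPmeas j
  set Y : Ω → (Fin T → ℝ) := fun ω i => Pm i ω with hYdef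
  have hYmeas : Measurable Y := measurable_pi_lambda _ fun i => hPm_meas i
  set Qv : ℕ → (Fin T → ℝ) → ℝ := fun j y => if h : j < T then y ⟨j, h⟩ else 0 with hQvdef
  have hQv_meas : ∀ j, Measurable (Qv j) := by
    intro j
    by_cases hj : j < T
    · simpa only [hQvdef, dif_pos hj] using measurable_pi_apply (⟨j, hj⟩ : Fin T)
    · simpa only [hQvdef, dif_neg hj] using (measurable_const :
        Measurable fun _ : Fin T → ℝ => (0 : ℝ))
  have hYQ : ∀ s, s ≤ T → ∀ ω,
      Lemma2Aux.histRec f g' Pm s ω = Lemma2Aux.histRec f g' Qv s (Y ω) := by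
    intro s hs ω
    refine Lemma2Aux.histRec_ext f g' Pm Qv s ω (Y ω) fun j hj => ?_
    have hjT : j < T := by omega
    simp only [hQvdef, hYdef, dif_pos hjT]
  have hPmt : ∀ s, s ≤ t → ∀ ω,
      Lemma2Aux.histRec f g' Pm s ω = Lemma2Aux.histRec f g' P s ω := by
    intro s hs ω
    refine Lemma2Aux.histRec_ext f g' Pm P s ω ω fun j hj => ?_
    have : j ≠ t := by omega
    simp only [hPmdef, if_neg this]
  set a : (Fin T → ℝ) → ℝ := fun y => f t (Lemma2Aux.histRec f g' Qv t y) with hadef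
  have haY : ∀ ω, a (Y ω) = alpha t ω := by
    intro ω
    simp only [hadef]
    rw [← hYQ t ht.le ω, hPmt t le_rfl ω, hH t ω, ← hpreda t ω]
  set Rm : (Fin T → ℝ) → ℕ → Bool := fun y => (Lemma2Aux.histRec f g' Qv T y).1 with hRmdef
  have hRm_ge : ∀ ω, rejVector P alpha T ω ≤ Rm (Y ω) := by
    intro ω
    have hmono := Lemma2Aux.histRec_mono f g' hfmono hg'mono P Pm T ω ω ?_
    · show rejVector P alpha T ω ≤ (Lemma2Aux.histRec f g' Qv T (Y ω)).1
      rw [hrejeq ω, ← hYQ T le_rfl ω]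
      exact hmono.1
    · intro j hj
      by_cases hjt : j = t
      · subst hjt; simp only [hPmdef, if_pos rfl]; exact (hP01 j ω).1
      · simp only [hPmdef, if_neg hjt]; exact le_rfl
  have hRm_eq : ∀ ω, P t ω ≤ alpha t ω → Rm (Y ω) = rejVector P alpha T ω := by
    intro ω hle
    have hcongr : Lemma2Aux.histRec f g' P T ω = Lemma2Aux.histRec f g' Pm T ω := by
      refine Lemma2Aux.histRec_congr f g' P Pm T ω ω fun j hj => ?_
      by_cases hjt : j = t
      · subst hjt
        have hfa : f j (Lemma2Aux.histRec f g' P j ω) = alpha j ω := by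
          rw [hH j ω, ← hpreda j ω]
        have hga : g' j (Lemma2Aux.histRec f g' P j ω) = lam j ω := by
          rw [hH j ω, ← hpredl j ω]
        constructor
        · rw [hfa]
          exact iff_of_true hle (by simp only [hPmdef, if_pos rfl]; exact (ha01 j ω).1.le)
        · rw [hga]
          exact iff_of_true (le_trans hle (halam j ω))
            (by simp only [hPmdef, if_pos rfl]; exact lt_of_lt_of_le (ha01 j ω).1 (halam j ω) |>.le)
      · have : Pm j ω = P j ω := by simp only [hPmdef, if_neg hjt]
        rw [this]
        exact ⟨Iff.rfl, Iff.rfl⟩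
    show (Lemma2Aux.histRec f g' Qv T (Y ω)).1 = rejVector P alpha T ω
    rw [← hYQ T le_rfl ω, ← hcongr, ← hrejeq ω]
  have hhist_t : ∀ ω, history P alpha lam t ω = Lemma2Aux.histRec f g' Qv t (Y ω) := by
    intro ω
    rw [← hH t ω, ← hPmt t le_rfl ω, hYQ t ht.le ω]
  -- measurable maps on the vector side
  have ha_meas : Measurable a :=
    Lemma2Aux.measurable_comp_histRec f g' Qv hQv_meas t (f t)
  have hHt_meas : Measurable fun y => Lemma2Aux.histRec f g' Qv t y :=
    Lemma2Aux.measurable_comp_histRec f g' Qv hQv_meas t id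
  have hgRm_meas : Measurable fun y => g (Rm y) :=
    Lemma2Aux.measurable_comp_histRec f g' Qv hQv_meas T fun h => g h.1
  -- independence of P t and Y
  have hInd : IndepFun (P t) Y μ := by
    set t' : Fin T := ⟨t, ht⟩ with ht'def
    have hdisj : Disjoint ({t'} : Finset (Fin T)) ({t'}ᶜ : Finset (Fin T)) :=
      disjoint_compl_right
    have hIF := hindep.indepFun_finset ({t'} : Finset (Fin T)) ({t'}ᶜ : Finset (Fin T)) hdisj
      (fun i => hPmeas i.1)
    have hφ1 : Measurable fun v : ({t'} : Finset (Fin T)) → ℝ =>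
        v ⟨t', Finset.mem_singleton_self t'⟩ := measurable_pi_apply _
    have hφ2 : Measurable fun v : (({t'}ᶜ : Finset (Fin T)) → ℝ) => (fun i : Fin T =>
        if h : i ∈ ({t'}ᶜ : Finset (Fin T)) then v ⟨i, h⟩ else 0) := by
      refine measurable_pi_lambda _ fun i => ?_
      by_cases h : i ∈ ({t'}ᶜ : Finset (Fin T))
      · simpa only [dif_pos h] using measurable_pi_apply (⟨i, h⟩ : ({t'}ᶜ : Finset (Fin T)))
      · simpa only [dif_neg h] using
          (measurable_const : Measurable fun _ : (({t'}ᶜ : Finset (Fin T)) → ℝ) => (0 : ℝ))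
    have hcomp := hIF.comp hφ1 hφ2
    have he1 : ((fun v : ({t'} : Finset (Fin T)) → ℝ =>
        v ⟨t', Finset.mem_singleton_self t'⟩) ∘ (fun ω (i : ({t'} : Finset (Fin T))) =>
          P (i : Fin T).1 ω)) = P t := by
      funext ω; rfl
    have he2 : ((fun v : (({t'}ᶜ : Finset (Fin T)) → ℝ) => (fun i : Fin T =>
        if h : i ∈ ({t'}ᶜ : Finset (Fin T)) then v ⟨i, h⟩ else 0)) ∘
          (fun ω (i : (({t'}ᶜ : Finset (Fin T)))) => P (i : Fin T).1 ω)) = Y := by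
      funext ω
      funext i
      simp only [Function.comp_apply, hYdef, hPmdef]
      by_cases h : i ∈ ({t'}ᶜ : Finset (Fin T))
      · have hne : (i : Fin T).1 ≠ t := by
          intro hc
          have : i = t' := Fin.ext hc
          simp [this] at h
        simp only [dif_pos h, if_neg hne]
      · have heq : i = t' := by
          simpa [Finset.mem_compl, Finset.mem_singleton] using h
        subst heq
        simp [ht'def]
    rw [he1, he2] at hcomp
    exact hcomp
  -- the key set-integral estimate
  have hkey : ∀ s : Set Ω, MeasurableSet[MeasurableSpace.comap (history P alpha lam t) inferInstance] s → ∫ ω in s, X ω ∂μ ≤ ∫ ω in s, Z ω ∂μ := by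
    intro s hs
    obtain ⟨B, hB, rfl⟩ := MeasurableSpace.measurableSet_comap.mp hs
    have hAm : MeasurableSet (history P alpha lam t ⁻¹' B) := hhist_meas hB
    set hB0 : (Fin T → ℝ) → ℝ := fun y =>
      (if Lemma2Aux.histRec f g' Qv t y ∈ B then (1 : ℝ) else 0) / g (Rm y) with hB0def
    have hB0nn : ∀ y, 0 ≤ hB0 y := by
      intro y
      refine div_nonneg ?_ (hgpos _).le
      split <;> norm_num
    have hB0bd : ∀ y, hB0 y ≤ c⁻¹ := by
      intro y
      rw [← one_div]
      simp only [hB0def]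
      refine div_le_div₀ zero_le_one ?_ hc (hbot _)
      split <;> norm_num
    have hB0meas : Measurable hB0 := by
      refine Measurable.div ?_ hgRm_meas
      exact Measurable.ite (hHt_meas hB) measurable_const measurable_const
    set φ1 : Ω → ℝ := fun ω => (if P t ω ≤ a (Y ω) then (1 : ℝ) else 0) * hB0 (Y ω) with hφ1def
    set φ2 : Ω → ℝ := fun ω => a (Y ω) * hB0 (Y ω) with hφ2def
    have hφ1nn : ∀ ω, 0 ≤ φ1 ω := by
      intro ω
      refine mul_nonneg ?_ (hB0nn _)
      split <;> norm_num
    have hφ2nn : ∀ ω, 0 ≤ φ2 ω := by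
      intro ω
      refine mul_nonneg ?_ (hB0nn _)
      rw [haY ω]; exact (ha01 t ω).1.le
    have hφ1meas : Measurable φ1 := by
      refine Measurable.mul ?_ (hB0meas.comp hYmeas)
      exact Measurable.ite (measurableSet_le (hPmeas t) (ha_meas.comp hYmeas))
        measurable_const measurable_const
    have hφ2meas : Measurable φ2 := (ha_meas.comp hYmeas).mul (hB0meas.comp hYmeas)
    have hφ2int : Integrable φ2 μ := by
      refine Integrable.mono' (integrable_const c⁻¹) hφ2meas.aestronglyMeasurable
        (ae_of_all _ fun ω => ?_)
      rw [Real.norm_eq_abs, abs_of_nonneg (hφ2nn ω)]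
      calc φ2 ω ≤ 1 * c⁻¹ := by
            refine mul_le_mul ?_ (hB0bd _) (hB0nn _) zero_le_one
            rw [haY ω]; exact (ha01 t ω).2.le
        _ = c⁻¹ := one_mul _
    -- pointwise identification of the indicator integrands
    have hind1 : ∀ ω, (history P alpha lam t ⁻¹' B).indicator X ω = φ1 ω := by
      intro ω
      by_cases hmem : ω ∈ history P alpha lam t ⁻¹' B
      · rw [Set.indicator_of_mem hmem]
        replace hmem : history P alpha lam t ω ∈ B := hmem
        have hmem' : Lemma2Aux.histRec f g' Qv t (Y ω) ∈ B := by rw [← hhist_t ω]; exact hmem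
        by_cases hle : P t ω ≤ alpha t ω
        · simp only [hφ1def, hB0def, hXdef, haY ω, if_pos hmem', if_pos hle]
          rw [hRm_eq ω hle, one_mul]
        · simp only [hφ1def, hB0def, hXdef, haY ω, if_pos hmem', if_neg hle]
          rw [zero_div, zero_mul]

      · rw [Set.indicator_of_notMem hmem]
        replace hmem : history P alpha lam t ω ∉ B := hmem
        have hmem' : Lemma2Aux.histRec f g' Qv t (Y ω) ∉ B := by rw [← hhist_t ω]; exact hmem
        simp only [hφ1def, hB0def, if_neg hmem', zero_div, mul_zero]
    have hind2 : ∀ ω, φ2 ω ≤ (history P alpha lam t ⁻¹' B).indicator Z ω := by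
      intro ω
      by_cases hmem : ω ∈ history P alpha lam t ⁻¹' B
      · rw [Set.indicator_of_mem hmem]
        replace hmem : history P alpha lam t ω ∈ B := hmem
        have hmem' : Lemma2Aux.histRec f g' Qv t (Y ω) ∈ B := by rw [← hhist_t ω]; exact hmem
        simp only [hφ2def, hB0def, hZdef, haY ω, if_pos hmem', mul_one_div]
        exact div_le_div₀ (ha01 t ω).1.le le_rfl (hgpos _) (hgmono (hRm_ge ω))
      · rw [Set.indicator_of_notMem hmem]
        replace hmem : history P alpha lam t ω ∉ B := hmem
        have hmem' : Lemma2Aux.histRec f g' Qv t (Y ω) ∉ B := by rw [← hhist_t ω]; exact hmem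
        simp only [hφ2def, hB0def, if_neg hmem', zero_div, mul_zero, le_refl]
    -- the core inequality via independence and Fubini
    have hcore : ∫ ω, φ1 ω ∂μ ≤ ∫ ω, φ2 ω ∂μ := by
      have hpair : Measurable fun ω => (P t ω, Y ω) := (hPmeas t).prodMk hYmeas
      have hmap : μ.map (fun ω => (P t ω, Y ω)) = (μ.map (P t)).prod (μ.map Y) :=
        (indepFun_iff_map_prod_eq_prod_map_map (hPmeas t).aemeasurable
          hYmeas.aemeasurable).mp hInd
      haveI : IsProbabilityMeasure (μ.map (P t)) :=
        Measure.isProbabilityMeasure_map (hPmeas t).aemeasurable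
      haveI : IsProbabilityMeasure (μ.map Y) := Measure.isProbabilityMeasure_map hYmeas.aemeasurable
      set F : ℝ × (Fin T → ℝ) → ENNReal := fun p =>
        if p.1 ≤ a p.2 then ENNReal.ofReal (hB0 p.2) else 0 with hFdef
      have hFmeas : Measurable F := by
        refine Measurable.ite (measurableSet_le measurable_fst (ha_meas.comp measurable_snd))
          ?_ measurable_const
        exact ENNReal.measurable_ofReal.comp (hB0meas.comp measurable_snd)
      set G : (Fin T → ℝ) → ENNReal := fun y => ENNReal.ofReal (a y * hB0 y) with hGdef
      have hGmeas : Measurable G := ENNReal.measurable_ofReal.comp (ha_meas.mul hB0meas)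
      have hGeq : ∀ y, G y = ENNReal.ofReal (hB0 y) * ENNReal.ofReal (a y) := by
        intro y
        simp only [hGdef]
        rw [mul_comm (a y), ENNReal.ofReal_mul (hB0nn y)]
      have hL1 : ∫ ω, φ1 ω ∂μ = (∫⁻ ω, F (P t ω, Y ω) ∂μ).toReal := by
        rw [integral_eq_lintegral_of_nonneg_ae (ae_of_all _ hφ1nn)
          hφ1meas.aestronglyMeasurable]
        congr 1
        refine lintegral_congr fun ω => ?_
        simp only [hφ1def, hFdef]
        by_cases hle : P t ω ≤ a (Y ω)
        · rw [if_pos hle, if_pos hle, one_mul]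
        · rw [if_neg hle, if_neg hle, zero_mul, ENNReal.ofReal_zero]
      have hL2 : ∫ ω, φ2 ω ∂μ = (∫⁻ ω, G (Y ω) ∂μ).toReal := by
        rw [integral_eq_lintegral_of_nonneg_ae (ae_of_all _ hφ2nn)
          hφ2meas.aestronglyMeasurable]
      have hlint : ∫⁻ ω, F (P t ω, Y ω) ∂μ ≤ ∫⁻ ω, G (Y ω) ∂μ := by
        rw [← lintegral_map hFmeas hpair, hmap, ← lintegral_map hGmeas hYmeas,
          lintegral_prod_symm' F hFmeas]
        refine lintegral_mono_ae ?_
        have hbadmeas : MeasurableSet {y : Fin T → ℝ | a y ∈ Set.Icc (0 : ℝ) 1} :=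
          ha_meas measurableSet_Icc
        have hae : ∀ᵐ y ∂(μ.map Y), a y ∈ Set.Icc (0 : ℝ) 1 := by
          rw [ae_iff]
          have : {y : Fin T → ℝ | ¬ a y ∈ Set.Icc (0 : ℝ) 1} =
              {y : Fin T → ℝ | a y ∈ Set.Icc (0 : ℝ) 1}ᶜ := rfl
          rw [this, Measure.map_apply hYmeas hbadmeas.compl]
          have hpre : Y ⁻¹' {y : Fin T → ℝ | a y ∈ Set.Icc (0 : ℝ) 1}ᶜ = ∅ := by
            ext ω
            simp only [Set.mem_preimage, Set.mem_compl_iff, Set.mem_setOf_eq,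
              Set.mem_empty_iff_false, iff_false, not_not, haY ω]
            exact ⟨(ha01 t ω).1.le, (ha01 t ω).2.le⟩
          rw [hpre, measure_empty]
        filter_upwards [hae] with y hy
        have hinner : ∫⁻ x, F (x, y) ∂(μ.map (P t)) =
            ENNReal.ofReal (hB0 y) * (μ.map (P t)) (Set.Iic (a y)) := by
          have hFi : ∀ x, F (x, y) =
              (Set.Iic (a y)).indicator (fun _ => ENNReal.ofReal (hB0 y)) x := by
            intro x
            simp only [hFdef, Set.indicator_apply, Set.mem_Iic]
          rw [lintegral_congr hFi, lintegral_indicator measurableSet_Iic _, setLIntegral_const]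
        rw [hinner]
        have hP : (μ.map (P t)) (Set.Iic (a y)) ≤ ENNReal.ofReal (a y) := by
          rw [Measure.map_apply (hPmeas t) measurableSet_Iic]
          exact hnull t htnull (a y) hy
        calc ENNReal.ofReal (hB0 y) * (μ.map (P t)) (Set.Iic (a y))
            ≤ ENNReal.ofReal (hB0 y) * ENNReal.ofReal (a y) := mul_le_mul_right hP _
          _ = G y := (hGeq y).symm
      have hfin : ∫⁻ ω, G (Y ω) ∂μ ≠ ⊤ := by
        have hle : ∀ ω, G (Y ω) ≤ ENNReal.ofReal c⁻¹ := by
          intro ω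
          simp only [hGdef]
          refine ENNReal.ofReal_le_ofReal ?_
          calc a (Y ω) * hB0 (Y ω) ≤ 1 * c⁻¹ := by
                refine mul_le_mul ?_ (hB0bd _) (hB0nn _) zero_le_one
                rw [haY ω]; exact (ha01 t ω).2.le
            _ = c⁻¹ := one_mul _
        refine ne_top_of_le_ne_top ?_ (lintegral_mono hle)
        rw [lintegral_const]
        exact ENNReal.mul_ne_top ENNReal.ofReal_ne_top (measure_ne_top μ _)
      rw [hL1, hL2]
      exact ENNReal.toReal_mono hfin hlint
    -- assemble
    rw [← integral_indicator hAm, ← integral_indicator hAm]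
    calc ∫ ω, (history P alpha lam t ⁻¹' B).indicator X ω ∂μ
        = ∫ ω, φ1 ω ∂μ := integral_congr_ae (ae_of_all _ hind1)
      _ ≤ ∫ ω, φ2 ω ∂μ := hcore
      _ ≤ ∫ ω, (history P alpha lam t ⁻¹' B).indicator Z ω ∂μ :=
          integral_mono hφ2int (hZint.indicator hAm) hind2
  -- conclusion via conditional expectation
  have hsub : μ[Z - X|MeasurableSpace.comap (history P alpha lam t) inferInstance] =ᵐ[μ] μ[Z|MeasurableSpace.comap (history P alpha lam t) inferInstance] - μ[X|MeasurableSpace.comap (history P alpha lam t) inferInstance] := condExp_sub hZint hXint _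
  have h0 : 0 ≤ᵐ[μ] μ[Z - X|MeasurableSpace.comap (history P alpha lam t) inferInstance] := by
    refine ae_le_of_ae_le_trim (hm := hm') ?_
    refine ae_nonneg_of_forall_setIntegral_nonneg
      (integrable_condExp.trim hm' stronglyMeasurable_condExp) ?_
    intro s hs _
    rw [← setIntegral_trim hm' stronglyMeasurable_condExp hs,
      setIntegral_condExp hm' (hZint.sub hXint) hs]
    have hk := hkey s hs
    simp only [Pi.sub_apply]
    rw [integral_sub (hZint.integrableOn) (hXint.integrableOn)]
    linarith
  filter_upwards [hsub, h0] with ω h1 h2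
  rw [h1] at h2
  simp only [Pi.sub_apply, Pi.zero_apply] at h2
  linarith
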